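/- arXiv:1805.02715 — 2 statements merged into one kernel-verified Lean document; each statement's English description precedes it below -/
import Mathlib

section
/- If H is a connected graph with at least 2 vertices, then aw(P_2 □ H, 3) ≤ 4; that is, every exact 4-coloring of P_2 □ H contains a rainbow 3-AP. -/
open SimpleGraph

/-- `v` lists the vertices of a `k`-term arithmetic progression in `G`:
consecutive vertices are at a common distance `d`. -/
def IsAPIn {V : Type*} (G : SimpleGraph V) (k : ℕ) (v : Fin k → V) : Prop :=
  ∃ d : ℕ, ∀ (i : ℕ) (h : i + 1 < k),
    G.dist (v ⟨i, by omega⟩) (v ⟨i + 1, h⟩) = d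

/-- The coloring `c` admits a rainbow `k`-AP in `G`: a `k`-AP whose vertices
are pairwise distinct and receive pairwise distinct colors. -/
def HasRainbowAP {V α : Type*} (G : SimpleGraph V) (k : ℕ) (c : V → α) : Prop :=
  ∃ v : Fin k → V, IsAPIn G k v ∧ Function.Injective (c ∘ v)

/-- The anti-van der Waerden number `aw(G,k)`: the least positive `r` such that
every exact `r`-coloring of `G` contains a rainbow `k`-AP.  (For `r = |V(G)|+1`
there is no surjection onto `r` colors, so the defining set is nonempty and
`aw(G,k) ≤ |V(G)|+1` automatically, matching the convention.) -/
noncomputable def aw {V : Type*} [Fintype V] (G : SimpleGraph V) (k : ℕ) : ℕ :=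
  sInf {r : ℕ | 0 < r ∧ ∀ c : V → Fin r, Function.Surjective c → HasRainbowAP G k c}

namespace AwP2HProof

open SimpleGraph

/- ### Fin 2 and Fin 4 helpers -/

private lemma f2_add : ∀ i : Fin 2, i + 1 + 1 = i := by decide

private lemma f2_ne : ∀ i : Fin 2, i + 1 ≠ i := by decide

private lemma f2_other : ∀ i j : Fin 2, j ≠ i → j = i + 1 := by decide

private lemma f4_third : ∀ p q : Fin 4, ∃ k : Fin 4, k ≠ p ∧ k ≠ q := by decide

private lemma f4_triple : ∀ α : Fin 4, ∃ k1 k2 k3 : Fin 4,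
    k1 ≠ α ∧ k2 ≠ α ∧ k3 ≠ α ∧ k1 ≠ k2 ∧ k1 ≠ k3 ∧ k2 ≠ k3 := by decide

variable {VH : Type*} {H : SimpleGraph VH} {c : Fin 2 × VH → Fin 4}

/- ### Distance formula for `pathGraph 2 □ H` -/

private lemma adj2 {i j : Fin 2} (h : i ≠ j) : (pathGraph 2).Adj i j := by
  fin_cases i <;> fin_cases j <;> simp_all [pathGraph_adj]

private lemma rowd_mono : ∀ a b c : Fin 2, a ≠ b →
    (if a = c then 0 else 1) ≤ 1 + (if b = c then 0 else 1) := by decide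

private lemma walk_lb (hH : H.Connected) :
    ∀ {u v : Fin 2 × VH} (W : (pathGraph 2 □ H).Walk u v),
    (if u.1 = v.1 then 0 else 1) + H.dist u.2 v.2 ≤ W.length := by
  intro u v W
  induction W with
  | nil => simp
  | @cons a m b h q ih =>
    rcases boxProd_adj.mp h with ⟨h1, h2⟩ | ⟨h1, h2⟩
    · have hne : a.1 ≠ m.1 := h1.ne
      have := rowd_mono a.1 m.1 b.1 hne
      rw [Walk.length_cons]
      rw [h2] at *
      omega
    · have hd1 : H.dist a.2 m.2 = 1 := dist_eq_one_iff_adj.mpr h1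
      have htri := hH.dist_triangle (u := a.2) (v := m.2) (w := b.2)
      have hrow : (if a.1 = b.1 then (0:ℕ) else 1) = (if m.1 = b.1 then 0 else 1) := by
        rw [h2]
      rw [Walk.length_cons]
      omega

private lemma distG (hH : H.Connected) (i j : Fin 2) (x y : VH) :
    (pathGraph 2 □ H).dist (i,x) (j,y) = (if i = j then 0 else 1) + H.dist x y := by
  have hconn : (pathGraph 2 □ H).Connected :=
    (connected_boxProd).mpr ⟨by simpa using pathGraph_connected 1, hH⟩
  apply le_antisymm
  · obtain ⟨p, hp⟩ := hH.exists_walk_length_eq_dist x y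
    by_cases hij : i = j
    · subst hij
      have := SimpleGraph.dist_le (Walk.boxProdRight (pathGraph 2) i p)
      rw [show (Walk.boxProdRight (pathGraph 2) i p).length = p.length from Walk.length_map ..] at this
      simpa [hp] using this
    · have hadj : (pathGraph 2 □ H).Adj (i, x) (j, x) :=
        boxProd_adj.mpr (Or.inl ⟨adj2 hij, rfl⟩)
      have := SimpleGraph.dist_le (Walk.cons hadj (Walk.boxProdRight (pathGraph 2) j p))
      simp only [Walk.length_cons, show (Walk.boxProdRight (pathGraph 2) j p).length = p.length from Walk.length_map ..] at this
      simp only [if_neg hij]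
      omega
  · by_cases h0 : (pathGraph 2 □ H).dist (i,x) (j,y) = 0
    · have := hconn.dist_eq_zero_iff.mp h0
      have hi : i = j := congrArg Prod.fst this
      have hx : x = y := congrArg Prod.snd this
      subst hi; subst hx
      simp [h0, SimpleGraph.dist_self]
    · obtain ⟨p, hp⟩ := exists_walk_of_dist_ne_zero h0
      have := walk_lb hH p
      simpa [hp] using this

private lemma dsame (hH : H.Connected) (i : Fin 2) (x y : VH) :
    (pathGraph 2 □ H).dist (i,x) (i,y) = H.dist x y := by
  rw [distG hH]; simp

private lemma ddiff (hH : H.Connected) (i : Fin 2) (x y : VH) :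
    (pathGraph 2 □ H).dist (i,x) (i+1,y) = 1 + H.dist x y := by
  rw [distG hH]; rw [if_neg (f2_ne i).symm]

private lemma ddiff' (hH : H.Connected) (i : Fin 2) (x y : VH) :
    (pathGraph 2 □ H).dist (i+1,x) (i,y) = 1 + H.dist x y := by
  rw [distG hH]; rw [if_neg (f2_ne i)]

/- ### Geodesics in `H` -/

private lemma gv_le {x y : VH} (p : H.Walk x y) (hH : H.Connected) :
    ∀ i j, i ≤ j → j ≤ p.length → H.dist (p.getVert i) (p.getVert j) ≤ j - i := by
  intro i j hij hj
  induction j, hij using Nat.le_induction with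
  | base => simp
  | succ n hn ih =>
    have h1 : H.dist (p.getVert n) (p.getVert (n+1)) = 1 :=
      dist_eq_one_iff_adj.mpr (p.adj_getVert_succ (by omega))
    have htri := hH.dist_triangle (u := p.getVert i) (v := p.getVert n) (w := p.getVert (n+1))
    have := ih (by omega)
    omega

private lemma gv_dist {x y : VH} (p : H.Walk x y) (hgeo : p.length = H.dist x y)
    (hH : H.Connected) {i j : ℕ} (hij : i ≤ j) (hj : j ≤ p.length) :
    H.dist (p.getVert i) (p.getVert j) = j - i := by
  have h1 : H.dist x (p.getVert i) ≤ i := by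
    simpa using gv_le p hH 0 i (by omega) (by omega)
  have h2 : H.dist (p.getVert i) (p.getVert j) ≤ j - i := gv_le p hH i j hij hj
  have h3 : H.dist (p.getVert j) y ≤ p.length - j := by
    have := gv_le p hH j p.length hj le_rfl
    simpa [p.getVert_length] using this
  have htri1 := hH.dist_triangle (u := x) (v := p.getVert i) (w := p.getVert j)
  have htri2 := hH.dist_triangle (u := x) (v := p.getVert j) (w := y)
  omega

/- ### The center lemma -/

private lemma CL (hnr : ¬ HasRainbowAP (pathGraph 2 □ H) 3 c) {p q m : Fin 2 × VH}
    (hpq : c p ≠ c q) (hmp : c m ≠ c p) (hmq : c m ≠ c q)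
    (hd : (pathGraph 2 □ H).dist m p = (pathGraph 2 □ H).dist m q) : False := by
  apply hnr
  refine ⟨![p, m, q], ⟨(pathGraph 2 □ H).dist m p, ?_⟩, ?_⟩
  · intro i hi
    match i, hi with
    | 0, _ =>
      show (pathGraph 2 □ H).dist p m = (pathGraph 2 □ H).dist m p
      exact SimpleGraph.dist_comm
    | 1, _ =>
      show (pathGraph 2 □ H).dist m q = (pathGraph 2 □ H).dist m p
      omega
  · intro a b hab
    fin_cases a <;> fin_cases b <;> simp_all [Function.comp]

/- ### Row helpers -/

private lemma two_rows {P : Fin 4 → Prop} {x : VH} (h0 : P (c (0,x))) (h1 : P (c (1,x)))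
    (i : Fin 2) : P (c (i,x)) := by fin_cases i <;> assumption

private lemma other_row {α : Fin 4} (hall : ∀ x : VH, c (0,x) = α ∨ c (1,x) = α)
    {i : Fin 2} {x : VH} (h : c (i, x) ≠ α) : c (i+1, x) = α := by
  rcases hall x with h0 | h0 <;> fin_cases i <;> simp_all <;> exact h0

private lemma row_back {α : Fin 4} (hall : ∀ x : VH, c (0,x) = α ∨ c (1,x) = α)
    {i : Fin 2} {x : VH} (h : c (i+1, x) ≠ α) : c (i, x) = α := by
  have := other_row hall h
  rwa [f2_add] at this

/- ### Parity lemma: same-row distinct non-α colors are at odd `H`-distance -/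

private lemma PAR (hH : H.Connected) (hnr : ¬ HasRainbowAP (pathGraph 2 □ H) 3 c)
    {α : Fin 4} (hall : ∀ x : VH, c (0,x) = α ∨ c (1,x) = α)
    {g : Fin 2} {x1 x2 : VH}
    (h12 : c (g,x1) ≠ c (g,x2)) (h1 : c (g,x1) ≠ α) (h2 : c (g,x2) ≠ α)
    (heven : Even (H.dist x1 x2)) : False := by
  set K := H.dist x1 x2 with hK
  have hK0 : K ≠ 0 := by
    intro h
    exact h12 (by rw [hH.dist_eq_zero_iff.mp h])
  obtain ⟨p, hp⟩ := hH.exists_walk_length_eq_dist x1 x2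
  set M := p.getVert (K/2) with hM
  obtain ⟨K2, hK2⟩ := heven
  have hd1 : H.dist x1 M = K/2 := by
    have := gv_dist p (by rw [hp]) hH (i := 0) (j := K/2) (by omega) (by omega)
    simpa [hM] using this
  have hd2 : H.dist M x2 = K - K/2 := by
    have := gv_dist p (by rw [hp]) hH (i := K/2) (j := p.length) (by omega) le_rfl
    rw [p.getVert_length] at this
    rw [hM, this, hp]
  -- α-row of M is a center
  have key : ∀ ρ : Fin 2, c (ρ, M) = α → False := by
    intro ρ hρ
    refine CL hnr (p := (g,x1)) (q := (g,x2)) (m := (ρ,M)) h12 (by rw [hρ]; exact h1.symm)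
      (by rw [hρ]; exact h2.symm) ?_
    rw [distG hH, distG hH]
    have hcomm : H.dist M x1 = K/2 := by rw [SimpleGraph.dist_comm]; exact hd1
    omega
  rcases hall M with h | h
  · exact key 0 h
  · exact key 1 h

/- ### The spreading lemma -/

private lemma STAR (hH : H.Connected) (hnr : ¬ HasRainbowAP (pathGraph 2 □ H) 3 c)
    {W W' : VH} (hadj : H.Adj W W') {τ : Fin 4}
    (hW0 : c (0,W) = τ) (hW1 : c (1,W) = τ) {a' : Fin 2} {r' : Fin 4}
    (hx' : c (a',W') = r') (hr' : r' ≠ τ) (t : VH) :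
    ∃ i : Fin 2, c (i,t) = τ ∨ c (i,t) = r' := by
  by_contra hno
  push_neg at hno
  have hWrow : ∀ i : Fin 2, c (i, W) = τ := fun i => by fin_cases i <;> assumption
  set E := H.dist t W with hE
  set E' := H.dist t W' with hE'
  have hd1 : H.dist W W' = 1 := dist_eq_one_iff_adj.mpr hadj
  have hd1' : H.dist W' W = 1 := by rw [SimpleGraph.dist_comm]; exact hd1
  have htri1 := hH.dist_triangle (u := t) (v := W) (w := W')
  have htri2 := hH.dist_triangle (u := t) (v := W') (w := W)
  have hcase : E' = E ∨ E' = E + 1 ∨ E = E' + 1 := by omega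
  have hcl : ∀ (gc ρ : Fin 2), (pathGraph 2 □ H).dist (gc,t) (ρ,W) =
      (pathGraph 2 □ H).dist (gc,t) (a',W') → False := by
    intro gc ρ hd
    refine CL hnr (p := (ρ,W)) (q := (a',W')) (m := (gc,t))
      (by rw [hWrow ρ, hx']; exact hr'.symm)
      (by rw [hWrow ρ]; exact (hno gc).1) (by rw [hx']; exact (hno gc).2) hd
  rcases hcase with h | h | h
  · refine hcl a' a' ?_
    rw [dsame hH, dsame hH]; omega
  · refine hcl a' (a'+1) ?_
    rw [ddiff hH, dsame hH]; omega
  · refine hcl (a'+1) (a'+1) ?_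
    rw [dsame hH, ddiff' hH]; omega

/- ### Goal A: some color appears in every column -/

private lemma goalA (hH : H.Connected) (hnr : ¬ HasRainbowAP (pathGraph 2 □ H) 3 c)
    (hsurj : Function.Surjective c)
    (hbi : ∃ x : VH, c (0,x) ≠ c (1,x)) :
    ∃ α : Fin 4, ∀ x : VH, c (0,x) = α ∨ c (1,x) = α := by
  classical
  obtain ⟨g0, hg0⟩ := hbi
  -- minimal distance from a bichromatic column to an "alien" vertex
  set S : Set ℕ := {n | ∃ (gx : VH) (z : Fin 2 × VH), c (0,gx) ≠ c (1,gx) ∧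
    c z ≠ c (0,gx) ∧ c z ≠ c (1,gx) ∧ H.dist gx z.2 = n} with hSdef
  have hSne : S.Nonempty := by
    obtain ⟨k, hk1, hk2⟩ := f4_third (c (0,g0)) (c (1,g0))
    obtain ⟨z, hz⟩ := hsurj k
    exact ⟨H.dist g0 z.2, g0, z, hg0, by rw [hz]; exact hk1, by rw [hz]; exact hk2, rfl⟩
  set m := sInf S with hm
  have hmS : m ∈ S := Nat.sInf_mem hSne
  obtain ⟨g, z, hgbi, hz0, hz1, hdist⟩ := hmS
  obtain ⟨a, X⟩ := z
  simp only at hz0 hz1 hdist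
  have hmin : ∀ n, n ∈ S → m ≤ n := fun n hn => Nat.sInf_le hn
  -- m ≥ 2
  have hm1 : m ≠ 0 := by
    intro h0
    have hgX : g = X := hH.dist_eq_zero_iff.mp (by rw [hdist, h0])
    subst hgX
    fin_cases a
    · exact hz0 rfl
    · exact hz1 rfl
  have hm2 : m ≠ 1 := by
    intro h1
    have hadjgX : H.Adj g X := dist_eq_one_iff_adj.mp (by rw [hdist, h1])
    have haa : c (a,g) ≠ c (a+1,g) := by
      fin_cases a
      · simpa using hgbi
      · simpa using hgbi.symm
    have hza : c (a,X) ≠ c (a,g) := by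
      fin_cases a
      · exact hz0
      · exact hz1
    have hza' : c (a,X) ≠ c (a+1,g) := by
      fin_cases a
      · simpa using hz1
      · simpa using hz0
    refine CL hnr (p := (a+1,g)) (q := (a,X)) (m := (a,g)) ?_ ?_ ?_ ?_
    · exact fun h => hza' h.symm
    · exact haa
    · exact fun h => hza h.symm
    · rw [ddiff hH, dsame hH, SimpleGraph.dist_self, hdist, h1]
  have hmge2 : 2 ≤ m := by omega
  -- geodesic from g to X
  obtain ⟨p0, hp0⟩ := hH.exists_walk_length_eq_dist g X
  rw [hdist] at hp0
  have hgv0 : p0.getVert 0 = g := p0.getVert_zero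
  have hgvm : p0.getVert m = X := by rw [← hp0]; exact p0.getVert_length
  have hZdist : ∀ j, j ≤ m → H.dist g (p0.getVert j) = j := by
    intro j hj
    have := gv_dist p0 (by rw [hp0, hdist]) hH (i := 0) (j := j) (by omega) (by omega)
    simpa [hgv0] using this
  have hXdist : ∀ j, j ≤ m → H.dist (p0.getVert j) X = m - j := by
    intro j hj
    have := gv_dist p0 (by rw [hp0, hdist]) hH (i := j) (j := p0.length) (by omega) le_rfl
    rw [p0.getVert_length, hp0] at this
    exact this
  -- interior columns take colors of column g
  have IA : ∀ j, 1 ≤ j → j ≤ m - 1 → ∀ i : Fin 2,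
      c (i, p0.getVert j) = c (0,g) ∨ c (i, p0.getVert j) = c (1,g) := by
    intro j hj1 hj2 i
    by_contra hcon
    push_neg at hcon
    have : j ∈ S := ⟨g, (i, p0.getVert j), hgbi, hcon.1, hcon.2, hZdist j (by omega)⟩
    have := hmin j this
    omega
  -- interior columns are monochromatic
  have IB : ∀ j, 1 ≤ j → j ≤ m - 1 → c (0, p0.getVert j) = c (1, p0.getVert j) := by
    intro j hj1 hj2
    by_contra hcon
    have hz0' : c (a,X) ≠ c (0, p0.getVert j) := by
      rcases IA j hj1 hj2 0 with h | h <;> rw [h] <;> assumption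
    have hz1' : c (a,X) ≠ c (1, p0.getVert j) := by
      rcases IA j hj1 hj2 1 with h | h <;> rw [h] <;> assumption
    have : m - j ∈ S := ⟨p0.getVert j, (a, X), hcon, hz0', hz1', hXdist j (by omega)⟩
    have := hmin (m - j) this
    omega
  set α := c (0, p0.getVert (m-1)) with hαdef
  have hα1 : c (1, p0.getVert (m-1)) = α := (IB (m-1) (by omega) le_rfl).symm
  have hαmem : α = c (0,g) ∨ α = c (1,g) := IA (m-1) (by omega) le_rfl 0
  have hrα : c (a,X) ≠ α := by
    rcases hαmem with h | h <;> rw [h] <;> assumption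
  -- the spreading from the last interior column
  have hadjX : H.Adj (p0.getVert (m-1)) X := by
    have := p0.adj_getVert_succ (i := m-1) (by omega)
    have he : m - 1 + 1 = m := by omega
    rw [he, hgvm] at this
    exact this
  have Hmeet1 : ∀ t : VH, ∃ i : Fin 2, c (i,t) = α ∨ c (i,t) = c (a,X) :=
    STAR hH hnr hadjX rfl hα1 rfl hrα
  -- the other color of column g
  set β := if α = c (0,g) then c (1,g) else c (0,g) with hβdef
  have hβα : β ≠ α := by
    rcases hαmem with h | h
    · rw [hβdef, if_pos h]
      rw [h]
      exact fun hh => hgbi hh.symm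
    · have hne : ¬ (α = c (0,g)) := by
        rw [h]; exact fun hh => hgbi hh.symm
      rw [hβdef, if_neg hne]
      rw [h]
      exact hgbi
  have hβmem : β = c (0,g) ∨ β = c (1,g) := by
    rw [hβdef]; split <;> simp
  have Hmeet2 : ∀ t : VH, ∃ i : Fin 2, c (i,t) = α ∨ c (i,t) = β := by
    -- least interior index with color α
    have hPex : ∃ j, (1 ≤ j ∧ j ≤ m - 1 ∧ c (0, p0.getVert j) = α) :=
      ⟨m-1, by omega, le_rfl, rfl⟩
    set j0 := Nat.find hPex with hj0def
    obtain ⟨hj01, hj0m, hj0α⟩ := Nat.find_spec hPex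
    have hmono0 : c (0, p0.getVert j0) = α := hj0α
    have hmono1 : c (1, p0.getVert j0) = α := by
      rw [← IB j0 hj01 hj0m]; exact hj0α
    by_cases hj0one : j0 = 1
    · -- spread from t 1 against the β-vertex of g
      have hadj1 : H.Adj (p0.getVert j0) g := by
        have := p0.adj_getVert_succ (i := 0) (by omega)
        rw [hgv0] at this
        rw [hj0one]
        exact this.symm
      obtain ⟨ρ, hρ⟩ : ∃ ρ : Fin 2, c (ρ, g) = β := by
        rcases hβmem with h | h
        · exact ⟨0, h.symm⟩
        · exact ⟨1, h.symm⟩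
      exact fun t => by
        obtain ⟨i, hi⟩ := STAR hH hnr hadj1 hmono0 hmono1 hρ hβα t
        exact ⟨i, hi⟩
    · -- spread from t j0 against t (j0 - 1) which is mono of color β
      have hj1ge : 1 ≤ j0 - 1 := by omega
      have hj1le : j0 - 1 ≤ m - 1 := by omega
      have hnot := Nat.find_min hPex (m := j0 - 1) (by omega)
      have hne : c (0, p0.getVert (j0-1)) ≠ α := by
        intro hcon
        exact hnot ⟨hj1ge, by omega, hcon⟩
      have hβval : c (0, p0.getVert (j0-1)) = β := by
        rcases IA (j0-1) hj1ge hj1le 0 with h | h <;> rcases hαmem with h' | h'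
        · exact absurd (h.trans h'.symm) hne
        · rw [hβdef, if_neg (fun hh => hne (h.trans hh.symm))]; exact h
        · rw [hβdef, if_pos h']; exact h
        · exact absurd (h.trans h'.symm) hne
      have hadjj : H.Adj (p0.getVert j0) (p0.getVert (j0-1)) := by
        have := p0.adj_getVert_succ (i := j0 - 1) (by omega)
        have he : j0 - 1 + 1 = j0 := by omega
        rw [he] at this
        exact this.symm
      exact fun t => by
        obtain ⟨i, hi⟩ := STAR hH hnr hadjj hmono0 hmono1 hβval hβα t
        exact ⟨i, hi⟩
  -- β and the alien color are distinct
  have hrβ : c (a,X) ≠ β := by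
    rcases hβmem with h | h <;> rw [h] <;> assumption
  -- propagation: no column avoids α
  refine ⟨α, ?_⟩
  have step : ∀ y y' : VH, (c (0,y) ≠ α ∧ c (1,y) ≠ α) → H.Adj y y' →
      (c (0,y') ≠ α ∧ c (1,y') ≠ α) := by
    intro y y' hy hadj
    by_contra hcon
    push_neg at hcon
    -- y has an r-vertex and a β-vertex; y' has an α-vertex
    have hyi : ∀ i : Fin 2, c (i,y) ≠ α := fun i => by
      fin_cases i
      · exact hy.1
      · exact hy.2
    obtain ⟨i, hi⟩ := Hmeet1 y
    have hir : c (i, y) = c (a,X) := hi.resolve_left (hyi i)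
    obtain ⟨i', hi'⟩ := Hmeet2 y
    have hiβ : c (i', y) = β := hi'.resolve_left (hyi i')
    obtain ⟨iα, hiα⟩ : ∃ iα : Fin 2, c (iα, y') = α := by
      by_cases h : c (0,y') = α
      · exact ⟨0, h⟩
      · exact ⟨1, hcon h⟩
    have hii' : i ≠ i' := by
      intro h
      rw [h, hiβ] at hir
      exact hrβ hir.symm
    have hdyy : H.dist y y' = 1 := dist_eq_one_iff_adj.mpr hadj
    by_cases hiαi : iα = i
    · -- center (i,y) colored r
      refine CL hnr (p := (i',y)) (q := (iα,y')) (m := (i,y)) ?_ ?_ ?_ ?_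
      · rw [hiβ, hiα]; exact hβα
      · rw [hir, hiβ]; exact hrβ
      · rw [hir, hiα]; exact hrα
      · have hio : i' = i + 1 := f2_other i i' (Ne.symm hii')
        rw [hio, hiαi, ddiff hH, dsame hH, SimpleGraph.dist_self, hdyy]
    · -- center (i',y) colored β
      have hiαi' : iα = i' := by
        have h1 := f2_other i iα hiαi
        have h2 := f2_other i i' (Ne.symm hii')
        rw [h1, h2]
      refine CL hnr (p := (i,y)) (q := (iα,y')) (m := (i',y)) ?_ ?_ ?_ ?_
      · rw [hir, hiα]; exact hrα
      · rw [hiβ, hir]; exact fun h => hrβ h.symm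
      · rw [hiβ, hiα]; exact hβα
      · have hi : i = i' + 1 := f2_other i' i hii'
        rw [hi, hiαi', ddiff hH, dsame hH, SimpleGraph.dist_self, hdyy]
  intro x0
  by_contra hno
  push_neg at hno
  -- walk from x0 to g keeps columns α-free, contradiction at g
  have walkprop : ∀ (y y' : VH) (w : H.Walk y y'),
      (c (0,y) ≠ α ∧ c (1,y) ≠ α) → (c (0,y') ≠ α ∧ c (1,y') ≠ α) := by
    intro y y' w
    induction w with
    | nil => exact id
    | cons h q ih => exact fun hy => ih (step _ _ hy h)
  obtain ⟨w⟩ := hH.preconnected x0 g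
  have := walkprop x0 g w hno
  rcases hαmem with h | h
  · exact this.1 h.symm
  · exact this.2 h.symm

/- ### Endgame: all-same-row case -/

private lemma tempcore (hH : H.Connected) (hnr : ¬ HasRainbowAP (pathGraph 2 □ H) 3 c)
    {α : Fin 4} (hall : ∀ x : VH, c (0,x) = α ∨ c (1,x) = α)
    {a : Fin 2} {X Y Z : VH}
    (hβα : c (a,X) ≠ α) (hrα : c (a,Y) ≠ α) (hσα : c (a,Z) ≠ α)
    (hβr : c (a,X) ≠ c (a,Y)) (hβσ : c (a,X) ≠ c (a,Z)) (hrσ : c (a,Y) ≠ c (a,Z))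
    (hlt : H.dist Z X < H.dist Z Y) : False := by
  classical
  set D1 := H.dist Z X with hD1def
  set D2 := H.dist Z Y with hD2def
  have hαX : c (a+1, X) = α := other_row hall hβα
  -- parity of the two distances
  have ho1 : ¬ Even D1 := fun he => PAR hH hnr hall hβσ.symm hσα hβα he
  have ho2 : ¬ Even D2 := fun he => PAR hH hnr hall (fun h => hrσ h.symm) hσα hrα he
  have o1 := Nat.not_even_iff.mp ho1
  have o2 := Nat.not_even_iff.mp ho2
  have hgap : D1 + 2 ≤ D2 := by omega
  have hD1ne0 : D1 ≠ 0 := by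
    intro h
    have hZX : Z = X := hH.dist_eq_zero_iff.mp (by rw [← hD1def]; exact h)
    exact hβσ (by rw [hZX])
  have hD1ne1 : D1 ≠ 1 := by
    intro h1
    refine CL hnr (p := (a,Z)) (q := (a+1,X)) (m := (a,X)) ?_ ?_ ?_ ?_
    · rw [hαX]; exact hσα
    · exact hβσ
    · rw [hαX]; exact hβα
    · rw [dsame hH, ddiff hH, SimpleGraph.dist_self,
        SimpleGraph.dist_comm (u := X) (v := Z)]
      omega
  -- geodesic from Z to Y
  obtain ⟨pZY, hpZY⟩ := hH.exists_walk_length_eq_dist Z Y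
  have hgeo : pZY.length = H.dist Z Y := hpZY
  have hlen : pZY.length = D2 := by rw [hgeo, hD2def]
  set Q1 := pZY.getVert (D1 - 1) with hQ1def
  set Q2 := pZY.getVert D1 with hQ2def
  have hZQ1 : H.dist Z Q1 = D1 - 1 := by
    have := gv_dist pZY hgeo hH (i := 0) (j := D1 - 1) (by omega) (by omega)
    simpa [pZY.getVert_zero] using this
  have hZQ2 : H.dist Z Q2 = D1 := by
    have := gv_dist pZY hgeo hH (i := 0) (j := D1) (by omega) (by omega)
    simpa [pZY.getVert_zero] using this
  have hQ2Y : H.dist Q2 Y = D2 - D1 := by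
    have := gv_dist pZY hgeo hH (i := D1) (j := pZY.length) (by omega) le_rfl
    rw [pZY.getVert_length, hlen] at this
    exact this
  have hQadj : H.Adj Q1 Q2 := by
    have := pZY.adj_getVert_succ (i := D1 - 1) (by omega)
    have he : D1 - 1 + 1 = D1 := by omega
    rw [he] at this
    exact this
  have hQ1Q2 : H.dist Q1 Q2 = 1 := dist_eq_one_iff_adj.mpr hQadj
  -- sphere conditions around (a,Z)
  have hs1 : c (a+1, Q1) ≠ α := by
    intro hc
    refine CL hnr (p := (a,X)) (q := (a+1,Q1)) (m := (a,Z)) ?_ ?_ ?_ ?_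
    · rw [hc]; exact hβα
    · exact fun h => hβσ h.symm
    · rw [hc]; exact hσα
    · rw [dsame hH, ddiff hH]
      omega
  have hαQ1 : c (a, Q1) = α := row_back hall hs1
  have hμ : c (a, Q2) ≠ α := by
    intro hc
    refine CL hnr (p := (a,X)) (q := (a,Q2)) (m := (a,Z)) ?_ ?_ ?_ ?_
    · rw [hc]; exact hβα
    · exact fun h => hβσ h.symm
    · rw [hc]; exact hσα
    · rw [dsame hH, dsame hH]
      omega
  -- the two second colors agree
  have hs1μ : c (a+1, Q1) = c (a, Q2) := by
    by_contra hne
    refine CL hnr (p := (a+1,Q1)) (q := (a,Q2)) (m := (a,Q1)) hne ?_ ?_ ?_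
    · rw [hαQ1]; exact fun h => hs1 h.symm
    · rw [hαQ1]; exact fun h => hμ h.symm
    · rw [ddiff hH, dsame hH, SimpleGraph.dist_self, hQ1Q2]
  by_cases hμr : c (a, Q2) = c (a, Y)
  · refine CL hnr (p := (a,X)) (q := (a+1,Q1)) (m := (a,Z)) ?_ ?_ ?_ ?_
    · rw [hs1μ, hμr]; exact hβr
    · exact fun h => hβσ h.symm
    · rw [hs1μ, hμr]; exact fun h => hrσ h.symm
    · rw [dsame hH, ddiff hH]
      omega
  · refine PAR hH hnr hall hμr hμ hrα ?_
    rw [hQ2Y]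
    exact Nat.even_iff.mpr (by omega)

private lemma temp (hH : H.Connected) (hnr : ¬ HasRainbowAP (pathGraph 2 □ H) 3 c)
    {α : Fin 4} (hall : ∀ x : VH, c (0,x) = α ∨ c (1,x) = α)
    {a : Fin 2} {X Y Z : VH}
    (hβα : c (a,X) ≠ α) (hrα : c (a,Y) ≠ α) (hσα : c (a,Z) ≠ α)
    (hβr : c (a,X) ≠ c (a,Y)) (hβσ : c (a,X) ≠ c (a,Z)) (hrσ : c (a,Y) ≠ c (a,Z)) :
    False := by
  have hne : H.dist Z X ≠ H.dist Z Y := by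
    intro h
    refine CL hnr (p := (a,X)) (q := (a,Y)) (m := (a,Z)) hβr
      (fun hh => hβσ hh.symm) (fun hh => hrσ hh.symm) ?_
    rw [dsame hH, dsame hH, h]
  rcases Nat.lt_or_ge (H.dist Z X) (H.dist Z Y) with h | h
  · exact tempcore hH hnr hall hβα hrα hσα hβr hβσ hrσ h
  · exact tempcore hH hnr hall hrα hβα hσα (fun hh => hβr hh.symm) hrσ hβσ (by omega)

/- ### Endgame: mixed-row case -/

private lemma mixcore (hH : H.Connected) (hnr : ¬ HasRainbowAP (pathGraph 2 □ H) 3 c)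
    {α : Fin 4} (hall : ∀ x : VH, c (0,x) = α ∨ c (1,x) = α)
    {a : Fin 2} {X Y Z : VH}
    (hβα : c (a,X) ≠ α) (hrα : c (a,Y) ≠ α) (hσα : c (a+1,Z) ≠ α)
    (hβr : c (a,X) ≠ c (a,Y)) (hβσ : c (a,X) ≠ c (a+1,Z)) (hrσ : c (a,Y) ≠ c (a+1,Z))
    (hlt : H.dist Z X < H.dist Z Y) : False := by
  classical
  set L1 := H.dist Z X with hL1def
  set L2 := H.dist Z Y with hL2def
  have hαX : c (a+1, X) = α := other_row hall hβα
  have hαY : c (a+1, Y) = α := other_row hall hrα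
  have hαZ : c (a, Z) = α := row_back hall hσα
  have hL1ne0 : L1 ≠ 0 := by
    intro h
    have hZX : Z = X := hH.dist_eq_zero_iff.mp (by rw [← hL1def]; exact h)
    rw [hZX] at hσα
    exact hσα hαX
  have hL2ne1 : L2 ≠ L1 + 1 := by
    intro h2
    refine CL hnr (p := (a,X)) (q := (a+1,Y)) (m := (a+1,Z)) ?_ ?_ ?_ ?_
    · rw [hαY]; exact hβα
    · exact fun h => hβσ h.symm
    · rw [hαY]; exact hσα
    · rw [ddiff' hH, dsame hH]
      omega
  have hgap : L1 + 2 ≤ L2 := by omega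
  obtain ⟨pZY, hpZY⟩ := hH.exists_walk_length_eq_dist Z Y
  have hgeo : pZY.length = H.dist Z Y := hpZY
  have hlen : pZY.length = L2 := by rw [hgeo, hL2def]
  set T1 := pZY.getVert L1 with hT1def
  set T2 := pZY.getVert (L1+1) with hT2def
  set T0 := pZY.getVert 1 with hT0def
  have hZT1 : H.dist Z T1 = L1 := by
    have := gv_dist pZY hgeo hH (i := 0) (j := L1) (by omega) (by omega)
    simpa [pZY.getVert_zero] using this
  have hZT2 : H.dist Z T2 = L1 + 1 := by
    have := gv_dist pZY hgeo hH (i := 0) (j := L1+1) (by omega) (by omega)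
    simpa [pZY.getVert_zero] using this
  have hZT0 : H.dist Z T0 = 1 := by
    have := gv_dist pZY hgeo hH (i := 0) (j := 1) (by omega) (by omega)
    simpa [pZY.getVert_zero] using this
  have hT0T2 : H.dist T0 T2 = L1 := by
    have := gv_dist pZY hgeo hH (i := 1) (j := L1+1) (by omega) (by omega)
    rw [this]
    omega
  have hadjT : H.Adj T1 T2 := pZY.adj_getVert_succ (i := L1) (by omega)
  have hT1T2 : H.dist T1 T2 = 1 := dist_eq_one_iff_adj.mpr hadjT
  -- sphere conditions around z = (a+1, Z)
  have hvT1 : c (a, T1) ≠ α := by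
    intro hc
    refine CL hnr (p := (a,X)) (q := (a,T1)) (m := (a+1,Z)) ?_ ?_ ?_ ?_
    · rw [hc]; exact hβα
    · exact fun h => hβσ h.symm
    · rw [hc]; exact hσα
    · rw [ddiff' hH, ddiff' hH]
      omega
  have hαT1 : c (a+1, T1) = α := other_row hall hvT1
  have hvT2 : c (a+1, T2) ≠ α := by
    intro hc
    refine CL hnr (p := (a,X)) (q := (a+1,T2)) (m := (a+1,Z)) ?_ ?_ ?_ ?_
    · rw [hc]; exact hβα
    · exact fun h => hβσ h.symm
    · rw [hc]; exact hσα
    · rw [ddiff' hH, dsame hH]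
      omega
  have hαT2 : c (a, T2) = α := row_back hall hvT2
  have hs12 : c (a, T1) = c (a+1, T2) := by
    by_contra hne
    refine CL hnr (p := (a,T1)) (q := (a+1,T2)) (m := (a+1,T1)) hne ?_ ?_ ?_
    · rw [hαT1]; exact fun h => hvT1 h.symm
    · rw [hαT1]; exact fun h => hvT2 h.symm
    · rw [ddiff' hH, dsame hH, SimpleGraph.dist_self, hT1T2]
  by_cases hs1σ : c (a, T1) = c (a+1, Z)
  · exact temp hH hnr hall hβα hrα hvT1 hβr
      (by rw [hs1σ]; exact hβσ) (by rw [hs1σ]; exact hrσ)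
  · -- the second color near Z must be σ
    have hνne : c (a, T0) ≠ α := by
      intro hc
      refine CL hnr (p := (a+1,Z)) (q := (a,T0)) (m := (a+1,T2)) ?_ ?_ ?_ ?_
      · rw [hc]; exact hσα
      · rw [← hs12]; exact hs1σ
      · rw [hc]; exact hvT2
      · rw [dsame hH, ddiff' hH, SimpleGraph.dist_comm (u := T2) (v := Z),
          SimpleGraph.dist_comm (u := T2) (v := T0)]
        omega
    have hνσ : c (a, T0) = c (a+1, Z) := by
      by_contra hne
      refine CL hnr (p := (a+1,Z)) (q := (a,T0)) (m := (a,Z)) ?_ ?_ ?_ ?_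
      · exact fun h => hne h.symm
      · rw [hαZ]; exact fun h => hσα h.symm
      · rw [hαZ]; exact fun h => hνne h.symm
      · rw [ddiff hH, dsame hH, SimpleGraph.dist_self, hZT0]
    exact temp hH hnr hall hβα hrα hνne hβr
      (by rw [hνσ]; exact hβσ) (by rw [hνσ]; exact hrσ)

private lemma mix (hH : H.Connected) (hnr : ¬ HasRainbowAP (pathGraph 2 □ H) 3 c)
    {α : Fin 4} (hall : ∀ x : VH, c (0,x) = α ∨ c (1,x) = α)
    {a : Fin 2} {X Y Z : VH}
    (hβα : c (a,X) ≠ α) (hrα : c (a,Y) ≠ α) (hσα : c (a+1,Z) ≠ α)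
    (hβr : c (a,X) ≠ c (a,Y)) (hβσ : c (a,X) ≠ c (a+1,Z)) (hrσ : c (a,Y) ≠ c (a+1,Z)) :
    False := by
  have hne : H.dist Z X ≠ H.dist Z Y := by
    intro h
    refine CL hnr (p := (a,X)) (q := (a,Y)) (m := (a+1,Z)) hβr
      (fun hh => hβσ hh.symm) (fun hh => hrσ hh.symm) ?_
    rw [ddiff' hH, ddiff' hH, h]
  rcases Nat.lt_or_ge (H.dist Z X) (H.dist Z Y) with h | h
  · exact mixcore hH hnr hall hβα hrα hσα hβr hβσ hrσ h
  · exact mixcore hH hnr hall hrα hβα hσα (fun hh => hβr hh.symm) hrσ hβσ (by omega)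

private lemma endg (hH : H.Connected) (hnr : ¬ HasRainbowAP (pathGraph 2 □ H) 3 c)
    {α : Fin 4} (hall : ∀ x : VH, c (0,x) = α ∨ c (1,x) = α)
    {a b3 : Fin 2} {X Y Z : VH}
    (hβα : c (a,X) ≠ α) (hrα : c (a,Y) ≠ α) (hσα : c (b3,Z) ≠ α)
    (hβr : c (a,X) ≠ c (a,Y)) (hβσ : c (a,X) ≠ c (b3,Z)) (hrσ : c (a,Y) ≠ c (b3,Z)) :
    False := by
  by_cases hb : b3 = a
  · rw [hb] at hσα hβσ hrσ
    exact temp hH hnr hall hβα hrα hσα hβr hβσ hrσ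
  · have hb' : b3 = a + 1 := f2_other a b3 hb
    rw [hb'] at hσα hβσ hrσ
    exact mix hH hnr hall hβα hrα hσα hβr hβσ hrσ

/- ### Main argument -/

private lemma main (hH : H.Connected) (hsurj : Function.Surjective c)
    (hnr : ¬ HasRainbowAP (pathGraph 2 □ H) 3 c) : False := by
  classical
  by_cases hbi : ∃ x : VH, c (0,x) ≠ c (1,x)
  · obtain ⟨α, hall⟩ := goalA hH hnr hsurj hbi
    obtain ⟨k1, k2, k3, h1α, h2α, h3α, h12, h13, h23⟩ := f4_triple α
    obtain ⟨⟨b1, x1⟩, hc1⟩ := hsurj k1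
    obtain ⟨⟨b2, x2⟩, hc2⟩ := hsurj k2
    obtain ⟨⟨b3, x3⟩, hc3⟩ := hsurj k3
    rw [← hc1] at h1α h12 h13
    rw [← hc2] at h2α h12 h23
    rw [← hc3] at h3α h13 h23
    by_cases hb12 : b1 = b2
    · rw [← hb12] at h2α h12 h23
      exact endg hH hnr hall h1α h2α h3α h12 h13 h23
    · by_cases hb13 : b1 = b3
      · rw [← hb13] at h3α h13 h23
        exact endg hH hnr hall h1α h3α h2α h13 h12 (fun h => h23 h.symm)
      · have hb23 : b2 = b3 := by
          have e2 := f2_other b1 b2 (Ne.symm hb12)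
          have e3 := f2_other b1 b3 (Ne.symm hb13)
          rw [e2, e3]
        rw [← hb23] at h3α h23 h13
        exact endg hH hnr hall h2α h3α h1α h23 (fun h => h12 h.symm)
          (fun h => h13 h.symm)
  · push_neg at hbi
    by_cases hpair : ∃ x y : VH, H.Adj x y ∧ c (0,x) ≠ c (0,y)
    · obtain ⟨x, y, hadj, hpq⟩ := hpair
      obtain ⟨k, hk1, hk2⟩ := f4_third (c (0,x)) (c (0,y))
      obtain ⟨⟨a0, Wc⟩, hW⟩ := hsurj k
      have hW0 : c (0, Wc) = k := by
        fin_cases a0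
        · exact hW
        · rw [hbi Wc]; exact hW
      have hdxy : H.dist x y = 1 := dist_eq_one_iff_adj.mpr hadj
      have hdyx : H.dist y x = 1 := by
        rw [SimpleGraph.dist_comm]; exact hdxy
      have htri1 := hH.dist_triangle (u := Wc) (v := x) (w := y)
      have htri2 := hH.dist_triangle (u := Wc) (v := y) (w := x)
      have hx1 : c (1, x) = c (0,x) := (hbi x).symm
      have hy1 : c (1, y) = c (0,y) := (hbi y).symm
      have e01 : (1 : Fin 2) = 0 + 1 := rfl
      have hcase : H.dist Wc y = H.dist Wc x ∨ H.dist Wc y = H.dist Wc x + 1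
          ∨ H.dist Wc x = H.dist Wc y + 1 := by omega
      rcases hcase with h | h | h
      · refine CL hnr (p := (0,x)) (q := (0,y)) (m := (0,Wc)) hpq ?_ ?_ ?_
        · rw [hW0]; exact hk1
        · rw [hW0]; exact hk2
        · rw [dsame hH, dsame hH, h]
      · refine CL hnr (p := (1,x)) (q := (0,y)) (m := (0,Wc)) ?_ ?_ ?_ ?_
        · rw [hx1]; exact hpq
        · rw [hW0, hx1]; exact hk1
        · rw [hW0]; exact hk2
        · rw [e01, ddiff hH, dsame hH]
          omega
      · refine CL hnr (p := (0,x)) (q := (1,y)) (m := (0,Wc)) ?_ ?_ ?_ ?_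
        · rw [hy1]; exact hpq
        · rw [hW0]; exact hk1
        · rw [hW0, hy1]; exact hk2
        · rw [e01, dsame hH, ddiff hH]
          omega
    · push_neg at hpair
      have hwalk : ∀ (x y : VH) (w : H.Walk x y), c (0,x) = c (0,y) := by
        intro x y w
        induction w with
        | nil => rfl
        | cons h q ih => exact (hpair _ _ h).trans ih
      obtain ⟨⟨i0, v0⟩, h0⟩ := hsurj 0
      obtain ⟨⟨i1, v1⟩, h1⟩ := hsurj 1
      have e0 : c (0, v0) = 0 := by
        fin_cases i0
        · exact h0
        · rw [hbi v0]; exact h0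
      have e1 : c (0, v1) = 1 := by
        fin_cases i1
        · exact h1
        · rw [hbi v1]; exact h1
      obtain ⟨w⟩ := hH.preconnected v0 v1
      have := hwalk v0 v1 w
      rw [e0, e1] at this
      exact absurd this (by decide)

end AwP2HProof

/-- if `H` is connected with at least two vertices, then
`aw(P_2 □ H, 3) ≤ 4`. -/
theorem aw_p2_H_le_four {VH : Type*} [Fintype VH] (H : SimpleGraph VH)
    (hH : H.Connected) (h2 : 2 ≤ Fintype.card VH) :
    aw (pathGraph 2 □ H) 3 ≤ 4 := by
  apply Nat.sInf_le
  refine ⟨by norm_num, ?_⟩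
  intro c hsurj
  by_contra hnr
  exact AwP2HProof.main hH hsurj hnr
end

section
/- If m ≥ 4, n ≥ 4, and m + n is even, then 4 ≤ aw(P_m □ P_n, 3); equivalently, there exists an exact 3-coloring of the grid P_m □ P_n containing no rainbow 3-AP. -/
open SimpleGraph

section AuxGrid

variable {m n : ℕ}

lemma grid_connected (hm : 0 < m) (hn : 0 < n) :
    (pathGraph m □ pathGraph n).Connected := by
  rw [SimpleGraph.connected_boxProd]
  obtain ⟨m, rfl⟩ := Nat.exists_eq_succ_of_ne_zero hm.ne'
  obtain ⟨n, rfl⟩ := Nat.exists_eq_succ_of_ne_zero hn.ne'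
  exact ⟨pathGraph_connected m, pathGraph_connected n⟩

lemma walk_len_ge (u v : Fin m × Fin n) (p : (pathGraph m □ pathGraph n).Walk u v) :
    Nat.dist u.1.val v.1.val + Nat.dist u.2.val v.2.val ≤ p.length := by
  induction p with
  | nil => simp [Nat.dist]
  | @cons a w b h p ih =>
    rw [SimpleGraph.Walk.length_cons]
    rcases (SimpleGraph.boxProd_adj).mp h with ⟨h1, h2⟩ | ⟨h1, h2⟩
    · rw [pathGraph_adj] at h1
      have h2' : w.2.val = a.2.val := by rw [h2]
      simp only [Nat.dist] at *
      omega
    · rw [pathGraph_adj] at h1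
      have h2' : w.1.val = a.1.val := by rw [h2]
      simp only [Nat.dist] at *
      omega

lemma grid_dist_le (hm : 0 < m) (hn : 0 < n) :
    ∀ (k : ℕ) (u v : Fin m × Fin n), Nat.dist u.1.val v.1.val + Nat.dist u.2.val v.2.val = k →
      (pathGraph m □ pathGraph n).dist u v ≤ k := by
  intro k
  induction k with
  | zero =>
    intro u v h
    have : u = v := by
      have h1 : u.1 = v.1 := Fin.ext (Nat.eq_of_dist_eq_zero (by omega))
      have h2 : u.2 = v.2 := Fin.ext (Nat.eq_of_dist_eq_zero (by omega))
      exact Prod.ext h1 h2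
    simp [this]
  | succ k ih =>
    intro u v h
    have hconn := grid_connected hm hn
    obtain ⟨w, hadj, hw⟩ : ∃ w : Fin m × Fin n,
        (pathGraph m □ pathGraph n).Adj u w ∧
        Nat.dist w.1.val v.1.val + Nat.dist w.2.val v.2.val = k := by
      by_cases h1 : u.1.val < v.1.val
      · refine ⟨(⟨u.1.val + 1, by omega⟩, u.2), ?_, ?_⟩
        · exact Or.inl ⟨pathGraph_adj.mpr (Or.inl rfl), rfl⟩
        · simp only [Nat.dist] at *; omega
      by_cases h2 : v.1.val < u.1.val
      · refine ⟨(⟨u.1.val - 1, by omega⟩, u.2), ?_, ?_⟩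
        · exact Or.inl ⟨pathGraph_adj.mpr (Or.inr (by simp; omega)), rfl⟩
        · simp only [Nat.dist] at *; omega
      by_cases h3 : u.2.val < v.2.val
      · refine ⟨(u.1, ⟨u.2.val + 1, by omega⟩), ?_, ?_⟩
        · exact Or.inr ⟨pathGraph_adj.mpr (Or.inl rfl), rfl⟩
        · simp only [Nat.dist] at *; omega
      · have h4 : v.2.val < u.2.val := by simp only [Nat.dist] at h; omega
        refine ⟨(u.1, ⟨u.2.val - 1, by omega⟩), ?_, ?_⟩
        · exact Or.inr ⟨pathGraph_adj.mpr (Or.inr (by simp; omega)), rfl⟩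
        · simp only [Nat.dist] at *; omega
    calc (pathGraph m □ pathGraph n).dist u v
        ≤ (pathGraph m □ pathGraph n).dist u w + (pathGraph m □ pathGraph n).dist w v :=
          hconn.dist_triangle
      _ ≤ 1 + k := by
          have e1 : (pathGraph m □ pathGraph n).dist u w = 1 :=
            SimpleGraph.dist_eq_one_iff_adj.mpr hadj
          have e2 := ih w v hw
          omega
      _ = k + 1 := by omega

/-- The distance in the grid `P_m □ P_n` is the `L^1` distance. -/
lemma grid_dist (hm : 0 < m) (hn : 0 < n) (u v : Fin m × Fin n) :
    (pathGraph m □ pathGraph n).dist u v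
      = Nat.dist u.1.val v.1.val + Nat.dist u.2.val v.2.val := by
  refine le_antisymm (grid_dist_le hm hn _ u v rfl) ?_
  obtain ⟨p, hp⟩ := (grid_connected hm hn).exists_walk_length_eq_dist u v
  rw [← hp]
  exact walk_len_ge u v p

/-- The good coloring: the two neighbours of the corner `(0,0)` get color `2`,
the opposite corner `(m-1,n-1)` gets color `0`, everything else color `1`. -/
def goodCol (m n : ℕ) (x : Fin m × Fin n) : Fin 3 :=
  if (x.1.val = 0 ∧ x.2.val = 1) ∨ (x.1.val = 1 ∧ x.2.val = 0) then 2
  else if x.1.val = m - 1 ∧ x.2.val = n - 1 then 0 else 1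

lemma goodCol_cases (m n : ℕ) (x : Fin m × Fin n) :
    (goodCol m n x = 2 ∧ ((x.1.val = 0 ∧ x.2.val = 1) ∨ (x.1.val = 1 ∧ x.2.val = 0)))
    ∨ (goodCol m n x = 0 ∧ x.1.val = m - 1 ∧ x.2.val = n - 1)
    ∨ (goodCol m n x = 1 ∧ ¬((x.1.val = 0 ∧ x.2.val = 1) ∨ (x.1.val = 1 ∧ x.2.val = 0))
        ∧ ¬(x.1.val = m - 1 ∧ x.2.val = n - 1)) := by
  unfold goodCol
  split_ifs with h1 h2
  · exact Or.inl ⟨rfl, h1⟩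
  · exact Or.inr (Or.inl ⟨rfl, h2⟩)
  · exact Or.inr (Or.inr ⟨rfl, h1, h2⟩)

/-- Arithmetic helper: middle of the AP is the corner `z = (m-1,n-1)`. -/
lemma grid_midz (m n d s1 s2 z1 z2 t1 t2 : ℕ) (hm : 4 ≤ m) (hn : 4 ≤ n)
    (bs1 : s1 < m) (bs2 : s2 < n) (bz1 : z1 < m) (bz2 : z2 < n) (bt1 : t1 < m) (bt2 : t2 < n)
    (hs : (s1 = 0 ∧ s2 = 1) ∨ (s1 = 1 ∧ s2 = 0))
    (hz : z1 = m - 1 ∧ z2 = n - 1)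
    (ht : ¬((t1 = 0 ∧ t2 = 1) ∨ (t1 = 1 ∧ t2 = 0)))
    (h1 : Nat.dist s1 z1 + Nat.dist s2 z2 = d)
    (h2 : Nat.dist z1 t1 + Nat.dist z2 t2 = d) : False := by
  obtain ⟨rfl, rfl⟩ := hz
  simp only [Nat.dist] at h1 h2
  have hd : d = m + n - 3 := by
    clear h2 ht
    rcases hs with ⟨rfl, rfl⟩ | ⟨rfl, rfl⟩ <;> omega
  have h3 : t1 + t2 = 1 := by clear h1 hs ht; omega
  clear h1 h2 hs hd
  omega

/-- Arithmetic helper: middle of the AP is a neighbour `s` of the corner `(0,0)`. -/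
lemma grid_mids (m n d s1 s2 z1 z2 t1 t2 : ℕ) (hm : 4 ≤ m) (hn : 4 ≤ n)
    (bs1 : s1 < m) (bs2 : s2 < n) (bz1 : z1 < m) (bz2 : z2 < n) (bt1 : t1 < m) (bt2 : t2 < n)
    (hs : (s1 = 0 ∧ s2 = 1) ∨ (s1 = 1 ∧ s2 = 0))
    (hz : z1 = m - 1 ∧ z2 = n - 1)
    (ht : ¬(t1 = m - 1 ∧ t2 = n - 1))
    (h1 : Nat.dist s1 z1 + Nat.dist s2 z2 = d)
    (h2 : Nat.dist s1 t1 + Nat.dist s2 t2 = d) : False := by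
  obtain ⟨rfl, rfl⟩ := hz
  simp only [Nat.dist] at h1 h2
  rcases hs with ⟨rfl, rfl⟩ | ⟨rfl, rfl⟩ <;>
  · have hd : d = m + n - 3 := by clear h2 ht; omega
    have h3 : t1 = m - 1 ∧ t2 = n - 1 := by clear h1; omega
    exact ht h3

/-- Arithmetic helper: middle of the AP is the generic vertex (parity case). -/
lemma grid_midt (m n K d s1 s2 z1 z2 t1 t2 : ℕ) (hm : 4 ≤ m) (hn : 4 ≤ n)
    (hK : m + n = K + K)
    (bs1 : s1 < m) (bs2 : s2 < n) (bz1 : z1 < m) (bz2 : z2 < n) (bt1 : t1 < m) (bt2 : t2 < n)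
    (hs : (s1 = 0 ∧ s2 = 1) ∨ (s1 = 1 ∧ s2 = 0))
    (hz : z1 = m - 1 ∧ z2 = n - 1)
    (h1 : Nat.dist s1 t1 + Nat.dist s2 t2 = d)
    (h2 : Nat.dist t1 z1 + Nat.dist t2 z2 = d) : False := by
  obtain ⟨rfl, rfl⟩ := hz
  simp only [Nat.dist] at h1 h2
  rcases hs with ⟨rfl, rfl⟩ | ⟨rfl, rfl⟩ <;> omega

lemma goodCol_no_rainbow (hm : 4 ≤ m) (hn : 4 ≤ n) (heven : Even (m + n)) :
    ¬ HasRainbowAP (pathGraph m □ pathGraph n) 3 (goodCol m n) := by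
  rintro ⟨v, ⟨d, hd⟩, hinj⟩
  obtain ⟨K, hK⟩ := heven
  have h01 := hd 0 (by omega)
  have h12 := hd 1 (by omega)
  rw [grid_dist (by omega) (by omega)] at h01 h12
  simp only [show (0 + 1 : ℕ) = 1 from rfl, show (1 + 1 : ℕ) = 2 from rfl] at h01 h12
  set a := v ⟨0, by omega⟩ with ha
  set b := v ⟨1, by omega⟩ with hb
  set e := v ⟨2, by omega⟩ with he
  have h10 : Nat.dist b.1.val a.1.val + Nat.dist b.2.val a.2.val = d := by
    rw [Nat.dist_comm b.1.val, Nat.dist_comm b.2.val]; exact h01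
  have h21 : Nat.dist e.1.val b.1.val + Nat.dist e.2.val b.2.val = d := by
    rw [Nat.dist_comm e.1.val, Nat.dist_comm e.2.val]; exact h12
  have hab : goodCol m n a ≠ goodCol m n b := by
    intro h; exact absurd (congrArg Fin.val (hinj h)) (by simp)
  have hbe : goodCol m n b ≠ goodCol m n e := by
    intro h; exact absurd (congrArg Fin.val (hinj h)) (by simp)
  have hae : goodCol m n a ≠ goodCol m n e := by
    intro h; exact absurd (congrArg Fin.val (hinj h)) (by simp)
  have hA := goodCol_cases m n a
  have hB := goodCol_cases m n b
  have hE := goodCol_cases m n e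
  have ba1 := a.1.isLt; have ba2 := a.2.isLt
  have bb1 := b.1.isLt; have bb2 := b.2.isLt
  have be1 := e.1.isLt; have be2 := e.2.isLt
  clear hd hinj ha hb he
  rcases hA with ⟨ca, pa⟩ | ⟨ca, pa⟩ | ⟨ca, pa, pa'⟩ <;>
    rcases hB with ⟨cb, pb⟩ | ⟨cb, pb⟩ | ⟨cb, pb, pb'⟩ <;>
      rcases hE with ⟨ce, pe⟩ | ⟨ce, pe⟩ | ⟨ce, pe, pe'⟩ <;>
        first
          | (exact absurd (ca.trans cb.symm) hab)
          | (exact absurd (cb.trans ce.symm) hbe)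
          | (exact absurd (ca.trans ce.symm) hae)
          | (exact grid_midz m n d _ _ _ _ _ _ hm hn ba1 ba2 bb1 bb2 be1 be2 pa pb pe h01 h12)
          | (exact grid_midz m n d _ _ _ _ _ _ hm hn be1 be2 bb1 bb2 ba1 ba2 pe pb pa h21 h10)
          | (exact grid_mids m n d _ _ _ _ _ _ hm hn bb1 bb2 ba1 ba2 be1 be2 pb pa pe' h10 h12)
          | (exact grid_mids m n d _ _ _ _ _ _ hm hn bb1 bb2 be1 be2 ba1 ba2 pb pe pa' h12 h10)
          | (exact grid_midt m n K d _ _ _ _ _ _ hm hn hK ba1 ba2 be1 be2 bb1 bb2 pa pe h01 h12)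
          | (exact grid_midt m n K d _ _ _ _ _ _ hm hn hK be1 be2 ba1 ba2 bb1 bb2 pe pa h21 h10)

end AuxGrid

/-- if `m, n ≥ 4` and `m + n` is even, then
`4 ≤ aw(P_m □ P_n, 3)`; equivalently there is an exact 3-coloring of the grid
with no rainbow 3-AP. -/
theorem aw_ge_four_of_even (m n : ℕ) (hm : 4 ≤ m) (hn : 4 ≤ n) (heven : Even (m + n)) :
    4 ≤ aw (pathGraph m □ pathGraph n) 3 ∧
    ∃ c : Fin m × Fin n → Fin 3, Function.Surjective c ∧
      ¬ HasRainbowAP (pathGraph m □ pathGraph n) 3 c := by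
  have hnr := goodCol_no_rainbow hm hn heven
  have hsurj : Function.Surjective (goodCol m n) := by
    intro y
    fin_cases y
    · refine ⟨(⟨m - 1, by omega⟩, ⟨n - 1, by omega⟩), ?_⟩
      unfold goodCol
      rw [if_neg (by simp; omega), if_pos (by simp)]
      rfl
    · refine ⟨(⟨0, by omega⟩, ⟨0, by omega⟩), ?_⟩
      unfold goodCol
      rw [if_neg (by simp), if_neg (by simp; omega)]
      rfl
    · refine ⟨(⟨0, by omega⟩, ⟨1, by omega⟩), ?_⟩
      unfold goodCol
      rw [if_pos (by simp)]
      rfl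
  refine ⟨?_, goodCol m n, hsurj, hnr⟩
  apply le_csInf
  · refine ⟨m * n + 1, by omega, fun c' hc' => absurd (Fintype.card_le_of_surjective c' hc') ?_⟩
    simp only [Fintype.card_fin, Fintype.card_prod]
    omega
  · rintro r ⟨hr0, hr⟩
    by_contra hlt
    push_neg at hlt
    interval_cases r
    · obtain ⟨v, _, hinj⟩ := hr (fun _ => 0)
        (fun y => ⟨(⟨0, by omega⟩, ⟨0, by omega⟩), Subsingleton.elim _ _⟩)
      have := Fintype.card_le_of_injective _ hinj
      simp at this
    · have hs2 : Function.Surjective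
          (fun x : Fin m × Fin n => if x.1.val = 0 then (0 : Fin 2) else 1) := by
        intro y
        fin_cases y
        · refine ⟨(⟨0, by omega⟩, ⟨0, by omega⟩), ?_⟩
          show (if (0 : ℕ) = 0 then (0 : Fin 2) else 1) = _
          rw [if_pos rfl]
          rfl
        · refine ⟨(⟨1, by omega⟩, ⟨0, by omega⟩), ?_⟩
          show (if (1 : ℕ) = 0 then (0 : Fin 2) else 1) = _
          rw [if_neg (by omega)]
          rfl
      obtain ⟨v, _, hinj⟩ := hr _ hs2
      have := Fintype.card_le_of_injective _ hinj
      simp at this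
    · exact hnr (hr (goodCol m n) hsurj)
end
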